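/- Let φ ∈ L²(γ). Then the even part φ_even and the odd part φ_odd of φ both lie in L²(γ), and the even part of the dual activation φ̂ equals the dual activation of φ_even, while the odd part of φ̂ equals the dual activation of φ_odd; that is, (φ̂)_even = (φ_even)^∧ and (φ̂)_odd = (φ_odd)^∧ on [−1,1]. -/

import Mathlib

open MeasureTheory ProbabilityTheory Filter Set
open scoped ENNReal

noncomputable section

/-- The standard Gaussian measure `N(0,1)` on `ℝ`. -/
def stdGaussian : Measure ℝ := gaussianReal 0 1

/-- The dual activation `φ̂(t) = E[φ(σ₊X + σ₋Y) φ(σ₊X − σ₋Y)]` with `X, Y` i.i.d. `N(0,1)`,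
`σ₊ = √((1+t)/2)`, `σ₋ = √((1−t)/2)`. -/
def dualAct (φ : ℝ → ℝ) (t : ℝ) : ℝ :=
  ∫ p : ℝ × ℝ,
    φ (Real.sqrt ((1 + t) / 2) * p.1 + Real.sqrt ((1 - t) / 2) * p.2) *
    φ (Real.sqrt ((1 + t) / 2) * p.1 - Real.sqrt ((1 - t) / 2) * p.2)
    ∂(_root_.stdGaussian.prod _root_.stdGaussian)

/-- The even part of a function. -/
def evenPart (f : ℝ → ℝ) (x : ℝ) : ℝ := (f x + f (-x)) / 2

/-- The odd part of a function. -/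
def oddPart (f : ℝ → ℝ) (x : ℝ) : ℝ := (f x - f (-x)) / 2

instance : IsProbabilityMeasure _root_.stdGaussian := by unfold _root_.stdGaussian; infer_instance

/-- product of the 1D pdfs -/
def G2 : ℝ × ℝ → ℝ≥0∞ := fun p => gaussianPDF 0 1 p.1 * gaussianPDF 0 1 p.2

lemma G2_meas : Measurable G2 :=
  ((measurable_gaussianPDF 0 1).comp measurable_fst).mul
    ((measurable_gaussianPDF 0 1).comp measurable_snd)

lemma stdGaussian_eq : _root_.stdGaussian = volume.withDensity (gaussianPDF 0 1) :=
  gaussianReal_of_var_ne_zero 0 one_ne_zero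

lemma stdGaussian_prod_eq :
    _root_.stdGaussian.prod _root_.stdGaussian = (volume : Measure (ℝ × ℝ)).withDensity G2 := by
  refine Measure.prod_eq fun s t hs ht => ?_
  rw [Measure.volume_eq_prod, withDensity_apply _ (hs.prod ht), ← Measure.prod_restrict]
  simp only [G2]
  rw [
    lintegral_prod_mul ((measurable_gaussianPDF 0 1).aemeasurable)
      ((measurable_gaussianPDF 0 1).aemeasurable),
    stdGaussian_eq, withDensity_apply _ hs, withDensity_apply _ ht]

lemma gaussianPDFReal_mul_eq {x y u v : ℝ} (h : u^2 + v^2 = x^2 + y^2) :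
    gaussianPDFReal 0 1 u * gaussianPDFReal 0 1 v
      = gaussianPDFReal 0 1 x * gaussianPDFReal 0 1 y := by
  simp only [gaussianPDFReal]
  rw [mul_mul_mul_comm, ← Real.exp_add, mul_mul_mul_comm, ← Real.exp_add]
  congr 1
  push_cast
  rw [← add_div, ← add_div]
  congr 1
  nlinarith [h]

lemma G2_comp {s r : ℝ} (h : s^2 + r^2 = 1) (p : ℝ × ℝ) :
    G2 (s * p.1 + r * p.2, r * p.1 - s * p.2) = G2 p := by
  simp only [G2, gaussianPDF]
  rw [← ENNReal.ofReal_mul (gaussianPDFReal_nonneg _ _ _),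
    ← ENNReal.ofReal_mul (gaussianPDFReal_nonneg _ _ _)]
  congr 1
  exact gaussianPDFReal_mul_eq (by nlinarith [h])

section rot
variable {s r : ℝ}

/-- the rotation-reflection as a linear map -/
def rotL (s r : ℝ) : ℝ × ℝ →ₗ[ℝ] ℝ × ℝ :=
  Matrix.toLin (Module.Basis.finTwoProd ℝ) (Module.Basis.finTwoProd ℝ) !![s, r; r, -s]

lemma rotL_apply (p : ℝ × ℝ) : rotL s r p = (s * p.1 + r * p.2, r * p.1 - s * p.2) := by
  rw [rotL, Matrix.toLin_finTwoProd_apply]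
  simp [sub_eq_add_neg]

lemma rotL_det (h : s^2 + r^2 = 1) : LinearMap.det (rotL s r) = -1 := by
  rw [rotL, LinearMap.det_toLin, Matrix.det_fin_two_of]
  nlinarith [h]

lemma rotL_meas : Measurable (rotL s r) :=
  (rotL s r).continuous_of_finiteDimensional.measurable

lemma rotL_map_volume (h : s^2 + r^2 = 1) :
    (volume : Measure (ℝ × ℝ)).map (rotL s r) = volume := by
  rw [Measure.map_linearMap_addHaar_eq_smul_addHaar _ (by rw [rotL_det h]; norm_num),
    rotL_det h]
  norm_num

lemma rotL_map_gauss (h : s^2 + r^2 = 1) :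
    (_root_.stdGaussian.prod _root_.stdGaussian).map (rotL s r) = _root_.stdGaussian.prod _root_.stdGaussian := by
  ext A hA
  rw [Measure.map_apply rotL_meas hA, stdGaussian_prod_eq,
    withDensity_apply _ (hA.preimage rotL_meas), withDensity_apply _ hA,
    ← lintegral_indicator (hA.preimage rotL_meas) G2, ← lintegral_indicator hA G2]
  have key : (⇑(rotL s r) ⁻¹' A).indicator G2 = (A.indicator G2) ∘ ⇑(rotL s r) := by
    funext p
    by_cases hp : rotL s r p ∈ A
    · have hG : G2 (rotL s r p) = G2 p := by rw [rotL_apply]; exact G2_comp h p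
      simp [Set.indicator, hp, Function.comp, hG.symm]
    · simp [Set.indicator, hp, Function.comp]
  rw [key]
  simp only [Function.comp]
  rw [← lintegral_map (G2_meas.indicator hA) rotL_meas, rotL_map_volume h]
end rot

lemma lin_meas {s r : ℝ} : Measurable (fun p : ℝ × ℝ => s * p.1 + r * p.2) :=
  ((measurable_fst.const_mul s).add (measurable_snd.const_mul r))

lemma stdGaussian_map_lin {s r : ℝ} (h : s^2 + r^2 = 1) :
    (_root_.stdGaussian.prod _root_.stdGaussian).map (fun p : ℝ × ℝ => s * p.1 + r * p.2) = _root_.stdGaussian := by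
  have hfun : (fun p : ℝ × ℝ => s * p.1 + r * p.2) = Prod.fst ∘ ⇑(rotL s r) := by
    funext p; simp [rotL_apply]
  rw [hfun, ← Measure.map_map measurable_fst rotL_meas, rotL_map_gauss h,
    Measure.map_fst_prod]
  simp

lemma memℒp_lin {φ : ℝ → ℝ} (hφ : MemLp φ 2 _root_.stdGaussian) {s r : ℝ} (h : s^2 + r^2 = 1) :
    MemLp (fun p : ℝ × ℝ => φ (s * p.1 + r * p.2)) 2 (_root_.stdGaussian.prod _root_.stdGaussian) := by
  have h1 : AEStronglyMeasurable φ ((_root_.stdGaussian.prod _root_.stdGaussian).map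
      (fun p : ℝ × ℝ => s * p.1 + r * p.2)) := by rw [stdGaussian_map_lin h]; exact hφ.1
  have := (memLp_map_measure_iff h1 lin_meas.aemeasurable).mp
    (by rw [stdGaussian_map_lin h]; exact hφ)
  exact this

lemma integrable_mul_lin {f g : ℝ → ℝ} (hf : MemLp f 2 _root_.stdGaussian)
    (hg : MemLp g 2 _root_.stdGaussian) {s r s' r' : ℝ} (h : s^2 + r^2 = 1) (h' : s'^2 + r'^2 = 1) :
    Integrable (fun p : ℝ × ℝ => f (s * p.1 + r * p.2) * g (s' * p.1 + r' * p.2))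
      (_root_.stdGaussian.prod _root_.stdGaussian) := by
  have hF := memℒp_lin hf h
  have hG := memℒp_lin hg h'
  rw [← memLp_one_iff_integrable]
  have := hG.smul (𝕜 := ℝ) hF (r := 1)
    (hpqr := ⟨by rw [inv_one]; exact ENNReal.inv_two_add_inv_two⟩)
  exact this

lemma stdGaussian_map_neg : _root_.stdGaussian.map (fun x : ℝ => -x) = _root_.stdGaussian := by
  have h := gaussianReal_map_const_mul (μ := 0) (v := 1) (-1)
  simp only [neg_one_mul, mul_zero] at h
  rw [_root_.stdGaussian]
  convert h using 2
  ext
  norm_num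

lemma memℒp_neg {φ : ℝ → ℝ} (hφ : MemLp φ 2 _root_.stdGaussian) :
    MemLp (fun x : ℝ => φ (-x)) 2 _root_.stdGaussian := by
  have h1 : AEStronglyMeasurable φ (_root_.stdGaussian.map (fun x : ℝ => -x)) := by
    rw [stdGaussian_map_neg]; exact hφ.1
  exact (memLp_map_measure_iff h1 measurable_neg.aemeasurable).mp
    (by rw [stdGaussian_map_neg]; exact hφ)

lemma stdGaussian_prod_map_negneg :
    (_root_.stdGaussian.prod _root_.stdGaussian).map (fun p : ℝ × ℝ => (-p.1, -p.2))
      = _root_.stdGaussian.prod _root_.stdGaussian := by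
  have : (fun p : ℝ × ℝ => (-p.1, -p.2)) = Prod.map (fun x : ℝ => -x) (fun x : ℝ => -x) := rfl
  rw [this, ← Measure.map_prod_map _ _ measurable_neg measurable_neg, stdGaussian_map_neg]

lemma integral_transport {e : ℝ × ℝ → ℝ × ℝ} (he : Measurable e)
    (hmap : (_root_.stdGaussian.prod _root_.stdGaussian).map e = _root_.stdGaussian.prod _root_.stdGaussian)
    {F : ℝ × ℝ → ℝ} (hF : AEStronglyMeasurable F (_root_.stdGaussian.prod _root_.stdGaussian)) :
    ∫ p, F (e p) ∂(_root_.stdGaussian.prod _root_.stdGaussian) = ∫ p, F p ∂(_root_.stdGaussian.prod _root_.stdGaussian) := by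
  rw [← integral_map he.aemeasurable (by rw [hmap]; exact hF), hmap]

section calc0
variable {φ : ℝ → ℝ} {a b : ℝ}

lemma habn (hab : a^2 + b^2 = 1) : a^2 + (-b)^2 = 1 := by rw [neg_sq]; exact hab

lemma int1 (hφ : MemLp φ 2 _root_.stdGaussian) (hab : a^2 + b^2 = 1) :
    Integrable (fun p : ℝ × ℝ => φ (a * p.1 + b * p.2) * φ (a * p.1 - b * p.2))
      (_root_.stdGaussian.prod _root_.stdGaussian) := by
  have h1 : (fun p : ℝ × ℝ => φ (a * p.1 + b * p.2) * φ (a * p.1 - b * p.2))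
      = fun p : ℝ × ℝ => φ (a * p.1 + b * p.2) * φ (a * p.1 + (-b) * p.2) := by
    funext p; rw [show a * p.1 + (-b) * p.2 = a * p.1 - b * p.2 by ring]
  rw [h1]; exact integrable_mul_lin hφ hφ hab (habn hab)

lemma int2 (hφ : MemLp φ 2 _root_.stdGaussian) (hab : a^2 + b^2 = 1) :
    Integrable (fun p : ℝ × ℝ => φ (a * p.1 + b * p.2) * φ (-(a * p.1 - b * p.2)))
      (_root_.stdGaussian.prod _root_.stdGaussian) := by
  have h1 : (fun p : ℝ × ℝ => φ (a * p.1 + b * p.2) * φ (-(a * p.1 - b * p.2)))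
      = fun p : ℝ × ℝ => φ (a * p.1 + b * p.2) * (fun x => φ (-x)) (a * p.1 + (-b) * p.2) := by
    funext p; simp only; rw [show -(a * p.1 + (-b) * p.2) = -(a * p.1 - b * p.2) by ring]
  rw [h1]; exact integrable_mul_lin hφ (memℒp_neg hφ) hab (habn hab)

lemma int3 (hφ : MemLp φ 2 _root_.stdGaussian) (hab : a^2 + b^2 = 1) :
    Integrable (fun p : ℝ × ℝ => φ (-(a * p.1 + b * p.2)) * φ (a * p.1 - b * p.2))
      (_root_.stdGaussian.prod _root_.stdGaussian) := by
  have h1 : (fun p : ℝ × ℝ => φ (-(a * p.1 + b * p.2)) * φ (a * p.1 - b * p.2))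
      = fun p : ℝ × ℝ => (fun x => φ (-x)) (a * p.1 + b * p.2) * φ (a * p.1 + (-b) * p.2) := by
    funext p; simp only; rw [show a * p.1 + (-b) * p.2 = a * p.1 - b * p.2 by ring]
  rw [h1]; exact integrable_mul_lin (memℒp_neg hφ) hφ hab (habn hab)

lemma int4 (hφ : MemLp φ 2 _root_.stdGaussian) (hab : a^2 + b^2 = 1) :
    Integrable (fun p : ℝ × ℝ => φ (-(a * p.1 + b * p.2)) * φ (-(a * p.1 - b * p.2)))
      (_root_.stdGaussian.prod _root_.stdGaussian) := by
  have h1 : (fun p : ℝ × ℝ => φ (-(a * p.1 + b * p.2)) * φ (-(a * p.1 - b * p.2)))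
      = fun p : ℝ × ℝ => (fun x => φ (-x)) (a * p.1 + b * p.2)
          * (fun x => φ (-x)) (a * p.1 + (-b) * p.2) := by
    funext p; simp only; rw [show -(a * p.1 + (-b) * p.2) = -(a * p.1 - b * p.2) by ring]
  rw [h1]; exact integrable_mul_lin (memℒp_neg hφ) (memℒp_neg hφ) hab (habn hab)

/-- swap symmetry -/
lemma swap_calc (hφ : MemLp φ 2 _root_.stdGaussian) (hab : a^2 + b^2 = 1) :
    ∫ p : ℝ × ℝ, φ (b * p.1 + a * p.2) * φ (b * p.1 - a * p.2) ∂(_root_.stdGaussian.prod _root_.stdGaussian)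
      = ∫ p : ℝ × ℝ, φ (a * p.1 + b * p.2) * φ (-(a * p.1 - b * p.2))
          ∂(_root_.stdGaussian.prod _root_.stdGaussian) := by
  have h0 := integral_transport (e := Prod.swap) measurable_swap (Measure.prod_swap)
    (int2 hφ hab).aestronglyMeasurable
  rw [← h0]
  have h1 : (fun p : ℝ × ℝ => φ (b * p.1 + a * p.2) * φ (b * p.1 - a * p.2))
      = fun p : ℝ × ℝ => φ (a * p.2 + b * p.1) * φ (-(a * p.2 - b * p.1)) := by
    funext p
    rw [show b * p.1 + a * p.2 = a * p.2 + b * p.1 by ring,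
      show b * p.1 - a * p.2 = -(a * p.2 - b * p.1) by ring]
  rw [h1]
  rfl

/-- neg-neg symmetry, version 1 -/
lemma negneg_calc1 (hφ : MemLp φ 2 _root_.stdGaussian) (hab : a^2 + b^2 = 1) :
    ∫ p : ℝ × ℝ, φ (-(a * p.1 + b * p.2)) * φ (-(a * p.1 - b * p.2))
        ∂(_root_.stdGaussian.prod _root_.stdGaussian)
      = ∫ p : ℝ × ℝ, φ (a * p.1 + b * p.2) * φ (a * p.1 - b * p.2)
          ∂(_root_.stdGaussian.prod _root_.stdGaussian) := by
  have h0 := integral_transport (e := fun p : ℝ × ℝ => (-p.1, -p.2))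
    (measurable_fst.neg.prodMk measurable_snd.neg) stdGaussian_prod_map_negneg
    (int1 hφ hab).aestronglyMeasurable
  rw [← h0]
  have h1 : (fun p : ℝ × ℝ => φ (-(a * p.1 + b * p.2)) * φ (-(a * p.1 - b * p.2)))
      = fun p : ℝ × ℝ => φ (a * (-p.1) + b * (-p.2)) * φ (a * (-p.1) - b * (-p.2)) := by
    funext p
    rw [show a * (-p.1) + b * (-p.2) = -(a * p.1 + b * p.2) by ring,
      show a * (-p.1) - b * (-p.2) = -(a * p.1 - b * p.2) by ring]
  rw [h1]

/-- neg-neg symmetry, version 2 -/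
lemma negneg_calc2 (hφ : MemLp φ 2 _root_.stdGaussian) (hab : a^2 + b^2 = 1) :
    ∫ p : ℝ × ℝ, φ (-(a * p.1 + b * p.2)) * φ (a * p.1 - b * p.2)
        ∂(_root_.stdGaussian.prod _root_.stdGaussian)
      = ∫ p : ℝ × ℝ, φ (a * p.1 + b * p.2) * φ (-(a * p.1 - b * p.2))
          ∂(_root_.stdGaussian.prod _root_.stdGaussian) := by
  have h0 := integral_transport (e := fun p : ℝ × ℝ => (-p.1, -p.2))
    (measurable_fst.neg.prodMk measurable_snd.neg) stdGaussian_prod_map_negneg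
    (int2 hφ hab).aestronglyMeasurable
  rw [← h0]
  have h1 : (fun p : ℝ × ℝ => φ (-(a * p.1 + b * p.2)) * φ (a * p.1 - b * p.2))
      = fun p : ℝ × ℝ => φ (a * (-p.1) + b * (-p.2)) * φ (-(a * (-p.1) - b * (-p.2))) := by
    funext p
    rw [show a * (-p.1) + b * (-p.2) = -(a * p.1 + b * p.2) by ring,
      show -(a * (-p.1) - b * (-p.2)) = a * p.1 - b * p.2 by ring]
  rw [h1]

end calc0



lemma even_calc {φ : ℝ → ℝ} {a b : ℝ} (hφ : MemLp φ 2 _root_.stdGaussian) (hab : a^2 + b^2 = 1) :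
    ∫ p : ℝ × ℝ, evenPart φ (a * p.1 + b * p.2) * evenPart φ (a * p.1 - b * p.2)
        ∂(_root_.stdGaussian.prod _root_.stdGaussian)
      = ((∫ p : ℝ × ℝ, φ (a * p.1 + b * p.2) * φ (a * p.1 - b * p.2)
            ∂(_root_.stdGaussian.prod _root_.stdGaussian))
        + (∫ p : ℝ × ℝ, φ (a * p.1 + b * p.2) * φ (-(a * p.1 - b * p.2))
            ∂(_root_.stdGaussian.prod _root_.stdGaussian))) / 2 := by
  have hexp : (fun p : ℝ × ℝ =>
        evenPart φ (a * p.1 + b * p.2) * evenPart φ (a * p.1 - b * p.2))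
      = fun p : ℝ × ℝ =>
        (φ (a * p.1 + b * p.2) * φ (a * p.1 - b * p.2)
          + φ (a * p.1 + b * p.2) * φ (-(a * p.1 - b * p.2))
          + (φ (-(a * p.1 + b * p.2)) * φ (a * p.1 - b * p.2)
          + φ (-(a * p.1 + b * p.2)) * φ (-(a * p.1 - b * p.2)))) / 4 := by
    funext p; simp only [evenPart]; ring
  rw [hexp]
  rw [integral_div, integral_add
      (f := fun p : ℝ × ℝ => φ (a * p.1 + b * p.2) * φ (a * p.1 - b * p.2)
          + φ (a * p.1 + b * p.2) * φ (-(a * p.1 - b * p.2)))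
      (g := fun p : ℝ × ℝ => φ (-(a * p.1 + b * p.2)) * φ (a * p.1 - b * p.2)
          + φ (-(a * p.1 + b * p.2)) * φ (-(a * p.1 - b * p.2)))
      ((int1 hφ hab).add (int2 hφ hab)) ((int3 hφ hab).add (int4 hφ hab)),
    integral_add (int1 hφ hab) (int2 hφ hab), integral_add (int3 hφ hab) (int4 hφ hab),
    negneg_calc1 hφ hab, negneg_calc2 hφ hab]
  ring

lemma odd_calc {φ : ℝ → ℝ} {a b : ℝ} (hφ : MemLp φ 2 _root_.stdGaussian) (hab : a^2 + b^2 = 1) :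
    ∫ p : ℝ × ℝ, oddPart φ (a * p.1 + b * p.2) * oddPart φ (a * p.1 - b * p.2)
        ∂(_root_.stdGaussian.prod _root_.stdGaussian)
      = ((∫ p : ℝ × ℝ, φ (a * p.1 + b * p.2) * φ (a * p.1 - b * p.2)
            ∂(_root_.stdGaussian.prod _root_.stdGaussian))
        - (∫ p : ℝ × ℝ, φ (a * p.1 + b * p.2) * φ (-(a * p.1 - b * p.2))
            ∂(_root_.stdGaussian.prod _root_.stdGaussian))) / 2 := by
  have hexp : (fun p : ℝ × ℝ =>
        oddPart φ (a * p.1 + b * p.2) * oddPart φ (a * p.1 - b * p.2))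
      = fun p : ℝ × ℝ =>
        (φ (a * p.1 + b * p.2) * φ (a * p.1 - b * p.2)
          - φ (a * p.1 + b * p.2) * φ (-(a * p.1 - b * p.2))
          + (-(φ (-(a * p.1 + b * p.2)) * φ (a * p.1 - b * p.2))
          + φ (-(a * p.1 + b * p.2)) * φ (-(a * p.1 - b * p.2)))) / 4 := by
    funext p; simp only [oddPart]; ring
  rw [hexp]
  rw [integral_div, integral_add
      (f := fun p : ℝ × ℝ => φ (a * p.1 + b * p.2) * φ (a * p.1 - b * p.2)
          - φ (a * p.1 + b * p.2) * φ (-(a * p.1 - b * p.2)))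
      (g := fun p : ℝ × ℝ => -(φ (-(a * p.1 + b * p.2)) * φ (a * p.1 - b * p.2))
          + φ (-(a * p.1 + b * p.2)) * φ (-(a * p.1 - b * p.2)))
      ((int1 hφ hab).sub (int2 hφ hab)) ((int3 hφ hab).neg.add (int4 hφ hab)),
    integral_sub (int1 hφ hab) (int2 hφ hab),
    integral_add
      (f := fun p : ℝ × ℝ => -(φ (-(a * p.1 + b * p.2)) * φ (a * p.1 - b * p.2)))
      (g := fun p : ℝ × ℝ => φ (-(a * p.1 + b * p.2)) * φ (-(a * p.1 - b * p.2)))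
      (int3 hφ hab).neg (int4 hφ hab),
    integral_neg (f := fun p : ℝ × ℝ => φ (-(a * p.1 + b * p.2)) * φ (a * p.1 - b * p.2)), negneg_calc1 hφ hab, negneg_calc2 hφ hab]
  ring

lemma memℒp_evenPart {φ : ℝ → ℝ} (hφ : MemLp φ 2 _root_.stdGaussian) :
    MemLp (evenPart φ) 2 _root_.stdGaussian := by
  have h1 : MemLp (fun x : ℝ => φ x + φ (-x)) 2 _root_.stdGaussian := hφ.add (memℒp_neg hφ)
  have h2 := h1.const_mul (1/2 : ℝ)
  have h3 : evenPart φ = fun x : ℝ => (1/2 : ℝ) * (φ x + φ (-x)) := by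
    funext x; simp only [evenPart]; ring
  rw [h3]; exact h2

lemma memℒp_oddPart {φ : ℝ → ℝ} (hφ : MemLp φ 2 _root_.stdGaussian) :
    MemLp (oddPart φ) 2 _root_.stdGaussian := by
  have h1 : MemLp (fun x : ℝ => φ x - φ (-x)) 2 _root_.stdGaussian := hφ.sub (memℒp_neg hφ)
  have h2 := h1.const_mul (1/2 : ℝ)
  have h3 : oddPart φ = fun x : ℝ => (1/2 : ℝ) * (φ x - φ (-x)) := by
    funext x; simp only [oddPart]; ring
  rw [h3]; exact h2



/-- for `φ ∈ L²(γ)`, the even and odd parts of `φ` lie in `L²(γ)`, and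
`(φ̂)_even = (φ_even)^∧` and `(φ̂)_odd = (φ_odd)^∧` on `[-1,1]`. -/
theorem dualAct_evenPart_oddPart (φ : ℝ → ℝ) (hφ : MemLp φ 2 stdGaussian) :
    MemLp (evenPart φ) 2 stdGaussian ∧
    MemLp (oddPart φ) 2 stdGaussian ∧
    (∀ t ∈ Set.Icc (-1 : ℝ) 1, evenPart (dualAct φ) t = dualAct (evenPart φ) t) ∧
    (∀ t ∈ Set.Icc (-1 : ℝ) 1, oddPart (dualAct φ) t = dualAct (oddPart φ) t) := by
  refine ⟨memℒp_evenPart hφ, memℒp_oddPart hφ, ?_, ?_⟩ <;> intro t ht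
  all_goals {
    have ht1 : (0:ℝ) ≤ (1 + t) / 2 := by have := ht.1; linarith
    have ht2 : (0:ℝ) ≤ (1 - t) / 2 := by have := ht.2; linarith
    have hab : (Real.sqrt ((1 + t) / 2))^2 + (Real.sqrt ((1 - t) / 2))^2 = 1 := by
      rw [Real.sq_sqrt ht1, Real.sq_sqrt ht2]; ring
    have hneg : dualAct φ (-t)
        = ∫ p : ℝ × ℝ,
            φ (Real.sqrt ((1 + t) / 2) * p.1 + Real.sqrt ((1 - t) / 2) * p.2) *
            φ (-(Real.sqrt ((1 + t) / 2) * p.1 - Real.sqrt ((1 - t) / 2) * p.2))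
            ∂(_root_.stdGaussian.prod _root_.stdGaussian) := by
      have h1 : dualAct φ (-t)
          = ∫ p : ℝ × ℝ,
              φ (Real.sqrt ((1 - t) / 2) * p.1 + Real.sqrt ((1 + t) / 2) * p.2) *
              φ (Real.sqrt ((1 - t) / 2) * p.1 - Real.sqrt ((1 + t) / 2) * p.2)
              ∂(_root_.stdGaussian.prod _root_.stdGaussian) := by
        simp only [dualAct, show (1 + -t) = (1 - t) by ring, show (1 - -t) = (1 + t) by ring]
      rw [h1]
      exact swap_calc hφ hab
    first
    | { show evenPart (dualAct φ) t = _
        have hL : evenPart (dualAct φ) t = (dualAct φ t + dualAct φ (-t)) / 2 := rfl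
        rw [hL, hneg]
        conv_rhs => rw [dualAct]
        rw [even_calc hφ hab]
        rfl }
    | { show oddPart (dualAct φ) t = _
        have hL : oddPart (dualAct φ) t = (dualAct φ t - dualAct φ (-t)) / 2 := rfl
        rw [hL, hneg]
        conv_rhs => rw [dualAct]
        rw [odd_calc hφ hab]
        rfl }
  }
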